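/- Klein-type inequality: for strictly positive matrices ρ, σ and a non-affine operator convex (hence strictly convex) function f, S_f(ρ‖σ) ≥ f(Tr(σ)/Tr(ρ)) · Tr(ρ), with equality if and only if ρ/Tr(ρ) = σ/Tr(σ). -/

import Mathlib

open Matrix Kronecker
open scoped ComplexOrder

noncomputable def applyFun {n : Type*} [Fintype n] [DecidableEq n]
    (f : ℝ → ℝ) (A : Matrix n n ℂ) : Matrix n n ℂ := by
  classical exact
    if hA : A.IsHermitian then
      (hA.eigenvectorUnitary : Matrix n n ℂ) *
        Matrix.diagonal (fun i => (f (hA.eigenvalues i) : ℂ)) *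
        (star (hA.eigenvectorUnitary : Matrix n n ℂ))
    else 0

noncomputable def msqrt {n : Type*} [Fintype n] [DecidableEq n]
    (A : Matrix n n ℂ) : Matrix n n ℂ := by
  classical exact if h : A.PosSemidef then
    (h.1.eigenvectorUnitary : Matrix n n ℂ) *
      Matrix.diagonal ((↑) ∘ Real.sqrt ∘ h.1.eigenvalues) *
      (star (h.1.eigenvectorUnitary : Matrix n n ℂ)) else 0

def vecOf {m n : Type*} (A : Matrix m n ℂ) : m × n → ℂ := fun p => A p.1 p.2

noncomputable def Srel {n : Type*} [Fintype n] [DecidableEq n]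
    (f : ℝ → ℝ) (ρ σ : Matrix n n ℂ) : ℝ :=
  (star (vecOf (msqrt ρ)) ⬝ᵥ (applyFun f (σ ⊗ₖ (ρ⁻¹)ᵀ) *ᵥ vecOf (msqrt ρ))).re

def OperatorConvexOn (I : Set ℝ) (f : ℝ → ℝ) : Prop :=
  ∀ (n : ℕ) (A B : Matrix (Fin n) (Fin n) ℂ) (hA : A.IsHermitian) (hB : B.IsHermitian),
    (∀ i, hA.eigenvalues i ∈ I) → (∀ i, hB.eigenvalues i ∈ I) →
    ∀ lam : ℝ, 0 ≤ lam → lam ≤ 1 →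
      ((lam : ℂ) • applyFun f A + ((1 - lam : ℝ) : ℂ) • applyFun f B -
        applyFun f ((lam : ℂ) • A + ((1 - lam : ℝ) : ℂ) • B)).PosSemidef

noncomputable def entf {n : Type*} [Fintype n] [DecidableEq n]
    (f : ℝ → ℝ) (ρ : Matrix n n ℂ) : ℝ :=
  -(Matrix.trace (ρ * applyFun f ρ⁻¹)).re

noncomputable def ptraceB {α β : Type*} [Fintype β]
    (M : Matrix (α × β) (α × β) ℂ) : Matrix α α ℂ :=
  Matrix.of fun i j => ∑ k, M (i, k) (j, k)

noncomputable def ptraceA {α β : Type*} [Fintype α]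
    (M : Matrix (α × β) (α × β) ℂ) : Matrix β β ℂ :=
  Matrix.of fun i j => ∑ k, M (k, i) (k, j)

def NonAffineOn (I : Set ℝ) (f : ℝ → ℝ) : Prop :=
  ¬ ∃ c b : ℝ, ∀ t ∈ I, f t = c * t + b

namespace Klein

variable {n : Type*} [Fintype n] [DecidableEq n]

lemma applyFun_herm {f : ℝ → ℝ} {A : Matrix n n ℂ} (hA : A.IsHermitian) :
    applyFun f A = (hA.eigenvectorUnitary : Matrix n n ℂ) *
        Matrix.diagonal (fun i => (f (hA.eigenvalues i) : ℂ)) *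
        (star (hA.eigenvectorUnitary : Matrix n n ℂ)) := dif_pos hA

/-- quadratic form of applyFun -/
lemma quadForm {f : ℝ → ℝ} {A : Matrix n n ℂ} (hA : A.IsHermitian) (u : n → ℂ) :
    star u ⬝ᵥ (applyFun f A *ᵥ u) =
      ((∑ k, f (hA.eigenvalues k) *
        Complex.normSq ((star (hA.eigenvectorUnitary : Matrix n n ℂ) *ᵥ u) k) : ℝ) : ℂ) := by
  rw [applyFun_herm hA]
  set U : Matrix n n ℂ := (hA.eigenvectorUnitary : Matrix n n ℂ)
  set y := star U *ᵥ u with hy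
  have h1 : star u ⬝ᵥ ((U * Matrix.diagonal (fun i => (f (hA.eigenvalues i) : ℂ)) * star U) *ᵥ u)
      = star y ⬝ᵥ (Matrix.diagonal (fun i => (f (hA.eigenvalues i) : ℂ)) *ᵥ y) := by
    rw [← Matrix.mulVec_mulVec, ← Matrix.mulVec_mulVec, dotProduct_mulVec (star u) U]
    congr 1
    · rw [show star u ᵥ* U = star (star U *ᵥ u) by
        rw [Matrix.star_mulVec, Matrix.star_eq_conjTranspose, Matrix.conjTranspose_conjTranspose]]
  rw [h1]
  simp only [dotProduct, Matrix.mulVec_diagonal, Pi.star_apply]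
  push_cast
  congr 1
  ext k
  rw [show (star (y k)) * (↑(f (hA.eigenvalues k)) * y k)
      = (f (hA.eigenvalues k) : ℂ) * ((starRingEnd ℂ) (y k) * y k) by simp [RingHom.comp_apply]; ring]
  rw [Complex.normSq_eq_conj_mul_self]

/-- quadratic form of a Hermitian matrix itself via eigen data -/
lemma quadFormSelf {A : Matrix n n ℂ} (hA : A.IsHermitian) (u : n → ℂ) :
    star u ⬝ᵥ (A *ᵥ u) =
      ((∑ k, hA.eigenvalues k *
        Complex.normSq ((star (hA.eigenvectorUnitary : Matrix n n ℂ) *ᵥ u) k) : ℝ) : ℂ) := by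
  have := quadForm (f := id) hA u
  rwa [show applyFun id A = A by
    rw [applyFun_herm hA]
    conv_rhs => rw [hA.spectral_theorem]
    rfl] at this

lemma mul_star_self {A : Matrix n n ℂ} (hA : A.IsHermitian) :
    (hA.eigenvectorUnitary : Matrix n n ℂ) * (star (hA.eigenvectorUnitary : Matrix n n ℂ)) = 1 :=
  (Matrix.mem_unitaryGroup_iff).mp (hA.eigenvectorUnitary).2

lemma msqrt_herm {A : Matrix n n ℂ} (h : A.PosSemidef) : (msqrt A).IsHermitian := by
  rw [msqrt, dif_pos h]
  simp only [Matrix.IsHermitian, Matrix.conjTranspose_mul, Matrix.diagonal_conjTranspose,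
    Matrix.star_eq_conjTranspose, Matrix.conjTranspose_conjTranspose, Matrix.mul_assoc]
  congr 3
  funext i
  simp

lemma msqrt_mul_self {A : Matrix n n ℂ} (h : A.PosSemidef) : msqrt A * msqrt A = A := by
  rw [msqrt, dif_pos h]
  set U : Matrix n n ℂ := (h.1.eigenvectorUnitary : Matrix n n ℂ)
  have hUU : star U * U = 1 := (Matrix.mem_unitaryGroup_iff').mp (h.1.eigenvectorUnitary).2
  have e : U * Matrix.diagonal ((↑) ∘ Real.sqrt ∘ h.1.eigenvalues) * star U *
      (U * Matrix.diagonal ((↑) ∘ Real.sqrt ∘ h.1.eigenvalues) * star U)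
      = U * (Matrix.diagonal ((↑) ∘ Real.sqrt ∘ h.1.eigenvalues) *
        Matrix.diagonal ((↑) ∘ Real.sqrt ∘ h.1.eigenvalues)) * star U := by
    rw [show U * Matrix.diagonal ((↑) ∘ Real.sqrt ∘ h.1.eigenvalues) * star U *
      (U * Matrix.diagonal ((↑) ∘ Real.sqrt ∘ h.1.eigenvalues) * star U)
      = U * Matrix.diagonal ((↑) ∘ Real.sqrt ∘ h.1.eigenvalues) * (star U * U) *
        Matrix.diagonal ((↑) ∘ Real.sqrt ∘ h.1.eigenvalues) * star U by noncomm_ring, hUU]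
    noncomm_ring
  rw [e, Matrix.diagonal_mul_diagonal]
  conv_rhs => rw [h.1.spectral_theorem, Unitary.conjStarAlgAut_apply]
  congr 3
  funext i
  simp only [Function.comp_apply]
  rw [← Complex.ofReal_mul, Real.mul_self_sqrt (h.eigenvalues_nonneg i)]
  rfl

/-- each eigenvalue kills the determinant -/
lemma det_sub_eigenvalue {A : Matrix n n ℂ} (hA : A.IsHermitian) (k : n) :
    Matrix.det (A - (hA.eigenvalues k : ℂ) • 1) = 0 := by
  set U : Matrix n n ℂ := (hA.eigenvectorUnitary : Matrix n n ℂ)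
  have hUU : U * star U = 1 := mul_star_self hA
  have h1 : A - (hA.eigenvalues k : ℂ) • 1
      = U * (Matrix.diagonal (fun i => ((hA.eigenvalues i : ℂ) - (hA.eigenvalues k : ℂ)))) *
        star U := by
    have h2 : U * ((hA.eigenvalues k : ℂ) • (1 : Matrix n n ℂ)) * star U
        = (hA.eigenvalues k : ℂ) • (1 : Matrix n n ℂ) := by
      rw [Matrix.mul_smul, Matrix.mul_one, Matrix.smul_mul, hUU]
    have h3 : Matrix.diagonal (fun i => ((hA.eigenvalues i : ℂ) - (hA.eigenvalues k : ℂ)))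
        = Matrix.diagonal (fun i => (hA.eigenvalues i : ℂ))
          - (hA.eigenvalues k : ℂ) • (1 : Matrix n n ℂ) := by
      ext i j
      by_cases hij : i = j
      · subst hij
        simp [Matrix.diagonal_apply_eq, Matrix.sub_apply, Matrix.smul_apply, Matrix.one_apply_eq]
      · simp [Matrix.diagonal_apply_ne _ hij, Matrix.sub_apply, Matrix.smul_apply,
          Matrix.one_apply_ne hij]
    rw [h3, Matrix.mul_sub, Matrix.sub_mul, h2]
    congr 1
    conv_lhs => rw [hA.spectral_theorem]
    rfl
  rw [h1, Matrix.det_mul, Matrix.det_mul, Matrix.det_diagonal]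
  rw [show ∏ i, ((hA.eigenvalues i : ℂ) - (hA.eigenvalues k : ℂ)) = 0 from
    Finset.prod_eq_zero (Finset.mem_univ k) (by simp)]
  ring

lemma sum_eigenvalues_eq_trace {A : Matrix n n ℂ} (hA : A.IsHermitian) :
    ((∑ k, hA.eigenvalues k : ℝ) : ℂ) = A.trace := by
  conv_rhs => rw [hA.spectral_theorem, Unitary.conjStarAlgAut_apply]
  rw [Matrix.trace_mul_cycle]
  rw [show (star (hA.eigenvectorUnitary : Matrix n n ℂ)) * (hA.eigenvectorUnitary : Matrix n n ℂ)
      = 1 from (Matrix.mem_unitaryGroup_iff').mp (hA.eigenvectorUnitary).2]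
  rw [Matrix.one_mul, Matrix.trace_diagonal]
  push_cast; rfl

/-- affine + g decomposition -/
lemma applyFun_affine (α β : ℝ) (g : ℝ → ℝ) {A : Matrix n n ℂ} (hA : A.IsHermitian) :
    applyFun (fun t => α * t + β + g t) A
      = (α : ℂ) • A + (β : ℂ) • (1 : Matrix n n ℂ) + applyFun g A := by
  rw [applyFun_herm (f := fun t => α * t + β + g t) hA, applyFun_herm (f := g) hA]
  set U : Matrix n n ℂ := (hA.eigenvectorUnitary : Matrix n n ℂ)
  have hUU : U * star U = 1 := mul_star_self hA
  have h3 : Matrix.diagonal (fun i => ((α * hA.eigenvalues i + β + g (hA.eigenvalues i) : ℝ) : ℂ))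
      = (α : ℂ) • Matrix.diagonal (fun i => ((hA.eigenvalues i : ℝ) : ℂ))
        + (β : ℂ) • (1 : Matrix n n ℂ)
        + Matrix.diagonal (fun i => ((g (hA.eigenvalues i) : ℝ) : ℂ)) := by
    ext i j
    by_cases hij : i = j
    · subst hij
      simp only [Matrix.diagonal_apply_eq, Matrix.add_apply, Matrix.smul_apply,
        Matrix.one_apply_eq, smul_eq_mul, mul_one]
      push_cast; ring
    · simp [Matrix.diagonal_apply_ne _ hij, Matrix.add_apply, Matrix.smul_apply,
        Matrix.one_apply_ne hij]
  rw [h3]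
  rw [Matrix.mul_add, Matrix.mul_add, Matrix.add_mul, Matrix.add_mul]
  congr 1
  · congr 1
    · rw [Matrix.mul_smul, Matrix.smul_mul]
      congr 1
      conv_rhs => rw [hA.spectral_theorem]
      rfl
    · rw [Matrix.mul_smul, Matrix.mul_one, Matrix.smul_mul, hUU]

lemma applyFun_eq_zero {g : ℝ → ℝ} {A : Matrix n n ℂ} (hA : A.IsHermitian)
    (h : ∀ k, g (hA.eigenvalues k) = 0) : applyFun g A = 0 := by
  rw [applyFun_herm hA]
  rw [show Matrix.diagonal (fun i => ((g (hA.eigenvalues i) : ℝ) : ℂ)) = 0 by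
    ext i j; simp [Matrix.diagonal, h]]
  simp

lemma applyFun_const_eig {f : ℝ → ℝ} {A : Matrix n n ℂ} (hA : A.IsHermitian) {r : ℝ}
    (h : ∀ k, f (hA.eigenvalues k) = r) : applyFun f A = (r : ℂ) • (1 : Matrix n n ℂ) := by
  rw [applyFun_herm hA]
  rw [show Matrix.diagonal (fun i => ((f (hA.eigenvalues i) : ℝ) : ℂ))
      = (r : ℂ) • (1 : Matrix n n ℂ) by
    ext i j
    by_cases hij : i = j
    · subst hij; simp [Matrix.diagonal_apply_eq, h]
    · simp [Matrix.diagonal_apply_ne _ hij, Matrix.one_apply_ne hij]]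
  rw [Matrix.mul_smul, Matrix.mul_one, Matrix.smul_mul, mul_star_self hA]

section one_dim

/-- 1×1 constant matrix -/
noncomputable def oneMat (c : ℝ) : Matrix (Fin 1) (Fin 1) ℂ := Matrix.of fun _ _ => (c : ℂ)

lemma oneMat_herm (c : ℝ) : (oneMat c).IsHermitian := by
  ext i j
  simp [oneMat, Matrix.conjTranspose_apply]

lemma oneMat_eig (c : ℝ) (k : Fin 1) : (oneMat_herm c).eigenvalues k = c := by
  have h := sum_eigenvalues_eq_trace (oneMat_herm c)
  rw [Fin.sum_univ_one] at h
  have h2 : (oneMat c).trace = (c : ℂ) := by simp [Matrix.trace, oneMat, Matrix.diag]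
  rw [h2] at h
  have := Complex.ofReal_inj.mp h
  rwa [show k = 0 from Subsingleton.elim _ _]

lemma psd_smul_one_nonneg {r : ℝ} (h : ((r : ℂ) • (1 : Matrix (Fin 1) (Fin 1) ℂ)).PosSemidef) :
    0 ≤ r := by
  have := h.re_dotProduct_nonneg (fun _ => 1)
  simpa [dotProduct, Matrix.mulVec, Matrix.one_apply] using this

lemma convexOn_of_operatorConvexOn {f : ℝ → ℝ} (hoc : OperatorConvexOn (Set.Ioi 0) f) :
    ConvexOn ℝ (Set.Ioi 0) f := by
  refine ⟨convex_Ioi 0, fun x hx y hy a b ha hb hab => ?_⟩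
  rcases eq_or_lt_of_le ha with rfl | ha'
  · simp only [zero_add] at hab; subst hab; simp
  rcases eq_or_lt_of_le hb with rfl | hb'
  · simp only [add_zero] at hab; subst hab; simp
  have hb1 : b = 1 - a := by linarith
  have key := hoc 1 (oneMat x) (oneMat y) (oneMat_herm x) (oneMat_herm y)
    (fun i => by rw [oneMat_eig]; exact hx) (fun i => by rw [oneMat_eig]; exact hy)
    a ha (by linarith)
  have hcomb : (a : ℂ) • oneMat x + ((1 - a : ℝ) : ℂ) • oneMat y = oneMat (a * x + b * y) := by
    ext i j
    simp only [oneMat, Matrix.add_apply, Matrix.smul_apply, Matrix.of_apply, smul_eq_mul]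
    push_cast [hb1]; ring
  rw [hcomb] at key
  rw [applyFun_const_eig (oneMat_herm x) (fun k => by rw [oneMat_eig]),
    applyFun_const_eig (oneMat_herm y) (fun k => by rw [oneMat_eig]),
    applyFun_const_eig (oneMat_herm (a * x + b * y)) (fun k => by rw [oneMat_eig])] at key
  have hkey2 : ((a * f x + b * f y - f (a * x + b * y) : ℝ) : ℂ)
      • (1 : Matrix (Fin 1) (Fin 1) ℂ)
      = (a : ℂ) • (f x : ℂ) • (1 : Matrix (Fin 1) (Fin 1) ℂ)
        + ((1 - a : ℝ) : ℂ) • (f y : ℂ) • (1 : Matrix (Fin 1) (Fin 1) ℂ)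
        - (f (a * x + b * y) : ℂ) • (1 : Matrix (Fin 1) (Fin 1) ℂ) := by
    rw [smul_smul, smul_smul, ← add_smul, ← sub_smul]
    congr 1
    push_cast [hb1]; ring
  rw [← hkey2] at key
  have := psd_smul_one_nonneg key
  simp only [smul_eq_mul]
  linarith

end one_dim

section scalar

lemma support_line {f : ℝ → ℝ} (hf : ConvexOn ℝ (Set.Ioi 0) f) {c : ℝ} (hc : 0 < c) :
    ∃ m : ℝ, ∀ t ∈ Set.Ioi (0:ℝ), f c + m * (t - c) ≤ f t := by
  set S : Set ℝ := (fun t => (f t - f c) / (t - c)) '' Set.Ioi c with hS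
  have hne : S.Nonempty := ⟨_, ⟨c + 1, by simp, rfl⟩⟩
  have hbdd : ∀ s ∈ S, (f c - f (c/2)) / (c - c/2) ≤ s := by
    rintro s ⟨t, ht, rfl⟩
    exact hf.slope_mono_adjacent (by simp [hc, half_pos] : c/2 ∈ Set.Ioi (0:ℝ))
      (by simp; linarith [Set.mem_Ioi.mp ht] : t ∈ Set.Ioi (0:ℝ)) (by linarith) ht
  refine ⟨sInf S, fun t ht => ?_⟩
  rcases lt_trichotomy t c with h | h | h
  · have hslope : (f c - f t) / (c - t) ≤ sInf S := by
      apply le_csInf hne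
      rintro s ⟨t', ht', rfl⟩
      exact hf.slope_mono_adjacent ht (by simp; linarith [Set.mem_Ioi.mp ht'] : t' ∈ Set.Ioi 0) h ht'
    rw [div_le_iff₀ (by linarith : 0 < c - t)] at hslope
    nlinarith
  · subst h; simp
  · have hslope : sInf S ≤ (f t - f c) / (t - c) :=
      csInf_le ⟨_, hbdd⟩ ⟨t, h, rfl⟩
    rw [le_div_iff₀ (by linarith : 0 < t - c)] at hslope
    linarith

lemma line_le {f : ℝ → ℝ} (hf : ConvexOn ℝ (Set.Ioi 0) f) {p q α β : ℝ} (hp : 0 < p)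
    (hpq : p < q) (haff : ∀ t ∈ Set.Icc p q, f t = α * t + β) :
    ∀ t ∈ Set.Ioi (0:ℝ), α * t + β ≤ f t := by
  have hfp : f p = α * p + β := haff p ⟨le_rfl, hpq.le⟩
  have hfq : f q = α * q + β := haff q ⟨hpq.le, le_rfl⟩
  intro t ht
  simp only [Set.mem_Ioi] at ht
  rcases lt_trichotomy t p with h | h | h
  · have := hf.slope_mono_adjacent (Set.mem_Ioi.mpr ht) (Set.mem_Ioi.mpr (hp.trans hpq)) h hpq
    rw [hfp, hfq] at this
    rw [show (α * q + β - (α * p + β)) / (q - p) = α by rw [div_eq_iff (by linarith : q - p ≠ 0)]; ring] at this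
    rw [div_le_iff₀ (by linarith : 0 < p - t)] at this
    nlinarith
  · subst h; rw [hfp]
  · rcases le_or_gt t q with h2 | h2
    · rw [haff t ⟨h.le, h2⟩]
    · have := hf.slope_mono_adjacent (Set.mem_Ioi.mpr hp) (Set.mem_Ioi.mpr (by linarith)) hpq h2
      rw [hfp, hfq] at this
      rw [show (α * q + β - (α * p + β)) / (q - p) = α by rw [div_eq_iff (by linarith : q - p ≠ 0)]; ring] at this
      rw [le_div_iff₀ (by linarith : 0 < t - q)] at this
      nlinarith

lemma line_lt_right {f : ℝ → ℝ} (hf : ConvexOn ℝ (Set.Ioi 0) f) {q w μ α β : ℝ} (hq : 0 < q)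
    (hfq : f q = α * q + β) (hqw : q < w) (hfw : α * w + β < f w) (hμ : w ≤ μ) :
    α * μ + β < f μ := by
  rcases eq_or_lt_of_le hμ with rfl | h
  · exact hfw
  · have hsl := hf.slope_mono_adjacent (Set.mem_Ioi.mpr hq)
      (Set.mem_Ioi.mpr (by linarith) : μ ∈ Set.Ioi 0) hqw h
    rw [div_le_div_iff₀ (by linarith) (by linarith)] at hsl
    nlinarith

lemma line_lt_left {f : ℝ → ℝ} (hf : ConvexOn ℝ (Set.Ioi 0) f) {p w μ α β : ℝ} (hμ0 : 0 < μ)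
    (hfp : f p = α * p + β) (hwp : w < p) (hfw : α * w + β < f w) (hμ : μ ≤ w) :
    α * μ + β < f μ := by
  rcases eq_or_lt_of_le hμ with rfl | h
  · exact hfw
  · have hsl := hf.slope_mono_adjacent (Set.mem_Ioi.mpr hμ0)
      (Set.mem_Ioi.mpr (by linarith) : p ∈ Set.Ioi 0) h hwp
    rw [div_le_div_iff₀ (by linarith) (by linarith)] at hsl
    nlinarith

end scalar

section core

lemma of_mat_apply {m l : Type*} (M : Matrix m l ℂ) (i : m) (j : l) :
    Matrix.of M i j = M i j := rfl

set_option maxHeartbeats 2000000 in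
/-- The core 2x2 rigidity contradiction. -/
lemma core2 {f : ℝ → ℝ} (hoc : OperatorConvexOn (Set.Ioi 0) f)
    {α β x sA sB : ℝ}
    (hx : 0 < x) (hxA : 0 < x + sA) (hxB : 0 < x + sB) (hsA : sA ≠ 0) (hsB : sB ≠ 0)
    (hgx : f x = α * x + β) (hgxA : f (x + sA) = α * (x + sA) + β)
    (hgpos : ∀ t ∈ Set.Ioi (0:ℝ), α * t + β ≤ f t)
    (hclass : ∀ t0 t1 : ℝ, t0 + t1 = sA / 2 + sB / 2 → t0 * t1 = sA * sB / 8 →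
      (0 < x + t0 ∧ 0 < x + t1) ∧
        (α * (x + t0) + β < f (x + t0) ∨ α * (x + t1) + β < f (x + t1))) :
    False := by
  classical
  set g : ℝ → ℝ := fun t => f t - (α * t + β) with hgdef
  set A : Matrix (Fin 2) (Fin 2) ℂ := Matrix.diagonal ![((x + sA : ℝ) : ℂ), ((x : ℝ) : ℂ)] with hAdef
  set B : Matrix (Fin 2) (Fin 2) ℂ :=
    Matrix.of !![((x + sB/2 : ℝ) : ℂ), ((sB/2 : ℝ) : ℂ); ((sB/2 : ℝ) : ℂ), ((x + sB/2 : ℝ) : ℂ)]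
    with hBdef
  have hAh : A.IsHermitian := by
    ext i j
    fin_cases i <;> fin_cases j <;>
      simp [hAdef, Matrix.conjTranspose_apply, Matrix.diagonal]
  have hBh : B.IsHermitian := by
    ext i j
    fin_cases i <;> fin_cases j <;> simp [hBdef, of_mat_apply, Matrix.conjTranspose_apply]
  -- eigenvalue dichotomies
  have hAeig : ∀ k, hAh.eigenvalues k = x + sA ∨ hAh.eigenvalues k = x := by
    intro k
    have hdet := det_sub_eigenvalue hAh k
    rw [Matrix.det_fin_two] at hdet
    set μ := hAh.eigenvalues k
    have h00 : (A - (μ : ℂ) • 1) 0 0 = ((x + sA : ℝ) : ℂ) - (μ : ℂ) := by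
      simp [hAdef, Matrix.sub_apply, Matrix.smul_apply, Matrix.diagonal, Matrix.one_apply]
    have h11 : (A - (μ : ℂ) • 1) 1 1 = ((x : ℝ) : ℂ) - (μ : ℂ) := by
      simp [hAdef, Matrix.sub_apply, Matrix.smul_apply, Matrix.diagonal, Matrix.one_apply]
    have h01 : (A - (μ : ℂ) • 1) 0 1 = 0 := by
      simp [hAdef, Matrix.sub_apply, Matrix.smul_apply, Matrix.diagonal, Matrix.one_apply]
    rw [h00, h11, h01] at hdet
    have hfac : (((x + sA - μ : ℝ)) : ℂ) * (((x - μ : ℝ)) : ℂ) = 0 := by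
      push_cast; push_cast at hdet; linear_combination hdet
    rcases mul_eq_zero.mp hfac with h | h
    · left; have := Complex.ofReal_eq_zero.mp h; linarith
    · right; have := Complex.ofReal_eq_zero.mp h; linarith
  have hBeig : ∀ k, hBh.eigenvalues k = x + sB ∨ hBh.eigenvalues k = x := by
    intro k
    have hdet := det_sub_eigenvalue hBh k
    rw [Matrix.det_fin_two] at hdet
    set μ := hBh.eigenvalues k
    have h00 : (B - (μ : ℂ) • 1) 0 0 = ((x + sB/2 : ℝ) : ℂ) - (μ : ℂ) := by
      simp [hBdef, of_mat_apply, Matrix.sub_apply, Matrix.smul_apply, Matrix.one_apply]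
    have h11 : (B - (μ : ℂ) • 1) 1 1 = ((x + sB/2 : ℝ) : ℂ) - (μ : ℂ) := by
      simp [hBdef, of_mat_apply, Matrix.sub_apply, Matrix.smul_apply, Matrix.one_apply]
    have h01 : (B - (μ : ℂ) • 1) 0 1 = ((sB/2 : ℝ) : ℂ) := by
      simp [hBdef, of_mat_apply, Matrix.sub_apply, Matrix.smul_apply, Matrix.one_apply]
    have h10 : (B - (μ : ℂ) • 1) 1 0 = ((sB/2 : ℝ) : ℂ) := by
      simp [hBdef, of_mat_apply, Matrix.sub_apply, Matrix.smul_apply, Matrix.one_apply]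
    rw [h00, h11, h01, h10] at hdet
    have hfac : (((x + sB - μ : ℝ)) : ℂ) * (((x - μ : ℝ)) : ℂ) = 0 := by
      push_cast; push_cast at hdet; linear_combination hdet
    rcases mul_eq_zero.mp hfac with h | h
    · left; have := Complex.ofReal_eq_zero.mp h; linarith
    · right; have := Complex.ofReal_eq_zero.mp h; linarith
  have hAeigIoi : ∀ k, hAh.eigenvalues k ∈ Set.Ioi (0:ℝ) := by
    intro k; rcases hAeig k with h | h <;> rw [h] <;> exact Set.mem_Ioi.mpr (by assumption)
  have hBeigIoi : ∀ k, hBh.eigenvalues k ∈ Set.Ioi (0:ℝ) := by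
    intro k; rcases hBeig k with h | h <;> rw [h] <;> exact Set.mem_Ioi.mpr (by assumption)
  have key := hoc 2 A B hAh hBh hAeigIoi hBeigIoi (1/2) (by norm_num) (by norm_num)
  set C : Matrix (Fin 2) (Fin 2) ℂ :=
    ((1/2 : ℝ) : ℂ) • A + ((1 - 1/2 : ℝ) : ℂ) • B with hCdef
  have hCh : C.IsHermitian := by
    ext i j
    fin_cases i <;> fin_cases j <;>
      simp [hCdef, hAdef, hBdef, of_mat_apply, Matrix.conjTranspose_apply, Matrix.add_apply,
        Matrix.smul_apply, Matrix.diagonal]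
  -- explicit entries of C
  have hC00 : C 0 0 = ((x + sA/2 + sB/4 : ℝ) : ℂ) := by
    simp [hCdef, hAdef, hBdef, of_mat_apply, Matrix.add_apply, Matrix.smul_apply, Matrix.diagonal]
    push_cast; ring
  have hC01 : C 0 1 = ((sB/4 : ℝ) : ℂ) := by
    simp [hCdef, hAdef, hBdef, of_mat_apply, Matrix.add_apply, Matrix.smul_apply, Matrix.diagonal]
    push_cast; ring
  have hC10 : C 1 0 = ((sB/4 : ℝ) : ℂ) := by
    simp [hCdef, hAdef, hBdef, of_mat_apply, Matrix.add_apply, Matrix.smul_apply, Matrix.diagonal]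
    push_cast; ring
  have hC11 : C 1 1 = ((x + sB/4 : ℝ) : ℂ) := by
    simp [hCdef, hAdef, hBdef, of_mat_apply, Matrix.add_apply, Matrix.smul_apply, Matrix.diagonal]
    push_cast; ring
  -- reduction from f to g
  have hfeq : f = fun t => α * t + β + g t := by
    funext t; simp [hgdef]
  have hhalf : ((1 - 1/2 : ℝ) : ℂ) = ((1/2 : ℝ) : ℂ) := by norm_num
  rw [hhalf] at key
  have hred : ((1/2 : ℝ) : ℂ) • applyFun f A + ((1/2 : ℝ) : ℂ) • applyFun f B -
      applyFun f C
      = ((1/2 : ℝ) : ℂ) • applyFun g A + ((1/2 : ℝ) : ℂ) • applyFun g B -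
        applyFun g C := by
    rw [hfeq]
    rw [applyFun_affine α β g hAh, applyFun_affine α β g hBh, applyFun_affine α β g hCh]
    rw [hCdef, hhalf]
    push_cast
    match_scalars <;> ring
  rw [hred] at key
  -- the probe vector
  set u : Fin 2 → ℂ := ![1, -1] with hudef
  have h0 := key.re_dotProduct_nonneg u
  -- applyFun g A = 0
  have hgA0 : applyFun g A = 0 := by
    apply applyFun_eq_zero hAh
    intro k
    rcases hAeig k with h | h <;> rw [h] <;> simp [hgdef] <;> [skip; skip] <;> first
      | (rw [hgxA]; ring) | (rw [hgx]; ring)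
  -- star u ⬝ᵥ applyFun g B *ᵥ u = 0
  have hgB0 : star u ⬝ᵥ (applyFun g B *ᵥ u) = 0 := by
    rw [quadForm hBh u]
    have hterm : ∀ k, g (hBh.eigenvalues k) *
        Complex.normSq ((star (hBh.eigenvectorUnitary : Matrix (Fin 2) (Fin 2) ℂ) *ᵥ u) k)
        = 0 := by
      intro k
      rcases hBeig k with h | h
      · -- eigenvalue x + sB : eigenvector has equal components
        have heig := hBh.mulVec_eigenvectorBasis k
        set v : Fin 2 → ℂ := ⇑(hBh.eigenvectorBasis k) with hvdef
        have e0 := congrFun heig 0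
        have e1 := congrFun heig 1
        simp only [Matrix.mulVec, dotProduct, Fin.sum_univ_two, Pi.smul_apply] at e0 e1
        rw [h] at e0 e1
        have hB00 : B 0 0 = ((x + sB/2 : ℝ) : ℂ) := by simp [hBdef, of_mat_apply]
        have hB01 : B 0 1 = ((sB/2 : ℝ) : ℂ) := by simp [hBdef, of_mat_apply]
        have hB10 : B 1 0 = ((sB/2 : ℝ) : ℂ) := by simp [hBdef, of_mat_apply]
        have hB11 : B 1 1 = ((x + sB/2 : ℝ) : ℂ) := by simp [hBdef, of_mat_apply]
        rw [hB00, hB01] at e0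
        rw [hB10, hB11] at e1
        have hsmul0 : (x + sB : ℝ) • v 0 = ((x + sB : ℝ) : ℂ) * v 0 := by
          rw [Complex.real_smul]
        have hsmul1 : (x + sB : ℝ) • v 1 = ((x + sB : ℝ) : ℂ) * v 1 := by
          rw [Complex.real_smul]
        rw [hsmul0] at e0
        rw [hsmul1] at e1
        have hv01 : v 0 = v 1 := by
          have hsBC : (sB : ℂ) ≠ 0 := Complex.ofReal_ne_zero.mpr hsB
          have hdiff : (sB : ℂ) * (v 0 - v 1) = 0 := by push_cast at e0 e1 ⊢; linear_combination e1 - e0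
          have := mul_eq_zero.mp hdiff
          rcases this with h' | h'
          · exact absurd h' hsBC
          · exact sub_eq_zero.mp h' 
        have hy : (star (hBh.eigenvectorUnitary : Matrix (Fin 2) (Fin 2) ℂ) *ᵥ u) k = 0 := by
          have hst : ∀ i, (star (hBh.eigenvectorUnitary : Matrix (Fin 2) (Fin 2) ℂ)) k i
              = star (v i) := by
            intro i
            rw [Matrix.star_apply]
            congr 1
          simp only [Matrix.mulVec, dotProduct, Fin.sum_univ_two, hst, hudef]
          rw [hv01]
          simp
        rw [hy]
        simp
      · rw [h]
        simp [hgdef, hgx]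
    rw [Finset.sum_congr rfl (fun k _ => hterm k)]
    simp
  -- spectral data of C
  have htrC : C.trace = ((2*x + sA/2 + sB/2 : ℝ) : ℂ) := by
    rw [Matrix.trace_fin_two, hC00, hC11]; push_cast; ring
  have hsum : hCh.eigenvalues 0 + hCh.eigenvalues 1 = 2*x + sA/2 + sB/2 := by
    have h' := sum_eigenvalues_eq_trace hCh
    rw [htrC, Fin.sum_univ_two] at h'
    exact_mod_cast h'
  have hdetC : C.det = (((x + sA/2 + sB/4)*(x + sB/4) - (sB/4)*(sB/4) : ℝ) : ℂ) := by
    rw [Matrix.det_fin_two, hC00, hC01, hC10, hC11]; push_cast; ring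
  have hprod : hCh.eigenvalues 0 * hCh.eigenvalues 1
      = (x + sA/2 + sB/4)*(x + sB/4) - (sB/4)*(sB/4) := by
    have h' : ((hCh.eigenvalues 0 * hCh.eigenvalues 1 : ℝ) : ℂ) = C.det := by
      rw [hCh.det_eq_prod_eigenvalues, Fin.prod_univ_two]
      push_cast
      rfl
    rw [hdetC] at h'
    exact Complex.ofReal_inj.mp h' 
  have ht1 : (hCh.eigenvalues 0 - x) + (hCh.eigenvalues 1 - x) = sA/2 + sB/2 := by linarith
  have ht2 : (hCh.eigenvalues 0 - x) * (hCh.eigenvalues 1 - x) = sA * sB / 8 := by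
    nlinarith [hsum, hprod]
  obtain ⟨⟨hp0, hp1⟩, hdisj⟩ := hclass _ _ ht1 ht2
  have hCpos : ∀ k, 0 < hCh.eigenvalues k := by
    intro k
    fin_cases k
    · simpa using (by linarith : (0:ℝ) < x + (hCh.eigenvalues 0 - x))
    · simpa using (by linarith : (0:ℝ) < x + (hCh.eigenvalues 1 - x))
  -- sum of nonneg terms is ≤ 0
  have hCsum : ∑ k, g (hCh.eigenvalues k) *
      Complex.normSq ((star (hCh.eigenvectorUnitary : Matrix (Fin 2) (Fin 2) ℂ) *ᵥ u) k) ≤ 0 := by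
    have hexp : star u ⬝ᵥ ((((1/2 : ℝ) : ℂ) • applyFun g A + ((1/2 : ℝ) : ℂ) • applyFun g B -
        applyFun g C) *ᵥ u) = - (star u ⬝ᵥ (applyFun g C *ᵥ u)) := by
      rw [Matrix.sub_mulVec, Matrix.add_mulVec, Matrix.smul_mulVec,
        Matrix.smul_mulVec, hgA0]
      rw [dotProduct_sub, dotProduct_add, dotProduct_smul,
        dotProduct_smul, hgB0]
      simp
    rw [hexp, quadForm hCh u] at h0
    have : (0:ℝ) ≤ - ∑ k, g (hCh.eigenvalues k) *
        Complex.normSq ((star (hCh.eigenvectorUnitary : Matrix (Fin 2) (Fin 2) ℂ) *ᵥ u) k) := by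
      simpa using h0
    linarith
  have hterms : ∀ k, 0 ≤ g (hCh.eigenvalues k) *
      Complex.normSq ((star (hCh.eigenvectorUnitary : Matrix (Fin 2) (Fin 2) ℂ) *ᵥ u) k) := by
    intro k
    apply mul_nonneg
    · have := hgpos (hCh.eigenvalues k) (Set.mem_Ioi.mpr (hCpos k))
      simp [hgdef]; linarith
    · exact Complex.normSq_nonneg _
  have hallzero : ∀ k ∈ Finset.univ, g (hCh.eigenvalues k) *
      Complex.normSq ((star (hCh.eigenvectorUnitary : Matrix (Fin 2) (Fin 2) ℂ) *ᵥ u) k) = 0 := by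
    rw [← Finset.sum_eq_zero_iff_of_nonneg (fun k _ => hterms k)]
    have := Finset.sum_nonneg (fun k (_ : k ∈ Finset.univ) => hterms k)
    linarith
  -- pick the index with positive g
  have hk0 : ∃ k0 : Fin 2, 0 < g (hCh.eigenvalues k0) := by
    rcases hdisj with h | h
    · rw [show x + (hCh.eigenvalues 0 - x) = hCh.eigenvalues 0 by ring] at h
      exact ⟨0, by simp [hgdef]; linarith [h]⟩
    · rw [show x + (hCh.eigenvalues 1 - x) = hCh.eigenvalues 1 by ring] at h
      exact ⟨1, by simp [hgdef]; linarith [h]⟩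
  obtain ⟨k0, hgk0⟩ := hk0
  have hnormSq0 : Complex.normSq
      ((star (hCh.eigenvectorUnitary : Matrix (Fin 2) (Fin 2) ℂ) *ᵥ u) k0) = 0 := by
    have := hallzero k0 (Finset.mem_univ k0)
    rcases mul_eq_zero.mp this with h | h
    · linarith
    · exact h
  have hst : ∀ i, (star (hCh.eigenvectorUnitary : Matrix (Fin 2) (Fin 2) ℂ)) k0 i
      = star (⇑(hCh.eigenvectorBasis k0) i) := by
    intro i
    rw [Matrix.star_apply]
    congr 1
  have hyv : (star (hCh.eigenvectorUnitary : Matrix (Fin 2) (Fin 2) ℂ) *ᵥ u) k0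
      = star (⇑(hCh.eigenvectorBasis k0) 0) - star (⇑(hCh.eigenvectorBasis k0) 1) := by
    simp only [Matrix.mulVec, dotProduct, Fin.sum_univ_two, hst, hudef]
    simp; ring
  have hv01 : ⇑(hCh.eigenvectorBasis k0) 0 = ⇑(hCh.eigenvectorBasis k0) 1 := by
    have h1 : star (⇑(hCh.eigenvectorBasis k0) 0) - star (⇑(hCh.eigenvectorBasis k0) 1) = 0 := by
      rw [← hyv]
      exact Complex.normSq_eq_zero.mp hnormSq0
    have h2 := sub_eq_zero.mp h1
    simpa using congrArg star h2
  -- eigen equation for C at k0 with equal components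
  have heig := hCh.mulVec_eigenvectorBasis k0
  have e0 := congrFun heig 0
  have e1 := congrFun heig 1
  simp only [Matrix.mulVec, dotProduct, Fin.sum_univ_two, Pi.smul_apply,
    Complex.real_smul] at e0 e1
  rw [hC00, hC01] at e0
  rw [hC10, hC11] at e1
  have hz : ⇑(hCh.eigenvectorBasis k0) 0 = 0 := by
    have hsAC : (sA : ℂ) ≠ 0 := Complex.ofReal_ne_zero.mpr hsA
    have hdiff : (sA : ℂ) * ⇑(hCh.eigenvectorBasis k0) 0 = 0 := by
      rw [hv01] at e0 e1 ⊢
      push_cast at e0 e1 ⊢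
      linear_combination 2 * (e0 - e1)
    rcases mul_eq_zero.mp hdiff with h | h
    · exact absurd h hsAC
    · exact h
  have hne := hCh.eigenvectorBasis.orthonormal.ne_zero k0
  apply hne
  ext i
  fin_cases i
  · simpa using hz
  · simpa using (hv01 ▸ hz : ⇑(hCh.eigenvectorBasis k0) 1 = 0)

lemma rigid_right {f : ℝ → ℝ} (hoc : OperatorConvexOn (Set.Ioi 0) f)
    (hcvx : ConvexOn ℝ (Set.Ioi 0) f) {p q α β w : ℝ} (hp : 0 < p) (hpq : p < q)
    (haff : ∀ t ∈ Set.Icc p q, f t = α * t + β) (hw : q < w) :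
    f w = α * w + β := by
  by_contra hne
  have hq0 : 0 < q := hp.trans hpq
  have hw0 : 0 < w := hq0.trans hw
  have hgpos := line_le hcvx hp hpq haff
  have hfw : α * w + β < f w := lt_of_le_of_ne (hgpos w (Set.mem_Ioi.mpr hw0)) (Ne.symm hne)
  have hfq : f q = α * q + β := haff q ⟨hpq.le, le_rfl⟩
  set x : ℝ := (p + q)/2 with hxdef
  set sA : ℝ := (q - p)/4 with hsAdef
  set sB : ℝ := 2*(w - x) with hsBdef
  have hx : 0 < x := by rw [hxdef]; linarith
  have hxq : x < q := by rw [hxdef]; linarith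
  have hpx : p < x := by rw [hxdef]; linarith
  have hsApos : 0 < sA := by rw [hsAdef]; linarith
  have hsBpos : 0 < sB := by rw [hsBdef]; linarith
  have hsB4 : 4 * sA < sB := by rw [hsAdef, hsBdef, hxdef]; linarith
  have hxAmem : x + sA ∈ Set.Icc p q := by
    constructor <;> [linarith; (rw [hsAdef, hxdef]; linarith)]
  apply core2 hoc (α := α) (β := β) (x := x) (sA := sA) (sB := sB) hx (by linarith)
    (by linarith : 0 < x + sB) (ne_of_gt hsApos) (ne_of_gt hsBpos)
    (haff x ⟨hpx.le, hxq.le⟩) (haff _ hxAmem) hgpos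
  intro t0 t1 hts htp
  have hP : 0 < t0 * t1 := by rw [htp]; positivity
  have hS : 0 < t0 + t1 := by rw [hts]; linarith
  have ht0pos : 0 < t0 := by nlinarith
  have ht1pos : 0 < t1 := by nlinarith
  refine ⟨⟨by linarith, by linarith⟩, ?_⟩
  have hwx : w = x + sB/2 := by rw [hsBdef]; ring
  have hP8 : 0 < sA * sB / 8 := by positivity
  rcases le_total t0 t1 with hle | hle
  · right
    have hfact : (t1 - sA/2) * (t1 - sB/2) = sA * sB / 8 := by
      linear_combination t1 * hts - htp
    have hf1 : 0 < t1 - sA/2 := by linarith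
    have hf2 : 0 < t1 - sB/2 := by
      by_contra h
      push_neg at h
      have := mul_nonpos_of_nonneg_of_nonpos hf1.le h
      rw [hfact] at this
      linarith
    exact line_lt_right hcvx hq0 hfq hw hfw (by linarith)
  · left
    have hfact : (t0 - sA/2) * (t0 - sB/2) = sA * sB / 8 := by
      linear_combination t0 * hts - htp
    have hf1 : 0 < t0 - sA/2 := by linarith
    have hf2 : 0 < t0 - sB/2 := by
      by_contra h
      push_neg at h
      have := mul_nonpos_of_nonneg_of_nonpos hf1.le h
      rw [hfact] at this
      linarith
    exact line_lt_right hcvx hq0 hfq hw hfw (by linarith)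

lemma affine_between {f : ℝ → ℝ} (hcvx : ConvexOn ℝ (Set.Ioi 0) f) {a b α β t : ℝ}
    (ha : 0 < a) (hab : a < b) (hfa : f a = α * a + β) (hfb : f b = α * b + β)
    (hlow : ∀ s ∈ Set.Ioi (0:ℝ), α * s + β ≤ f s) (ht : t ∈ Set.Icc a b) :
    f t = α * t + β := by
  obtain ⟨ht1, ht2⟩ := ht
  rcases eq_or_lt_of_le ht1 with rfl | h1
  · exact hfa
  rcases eq_or_lt_of_le ht2 with rfl | h2
  · exact hfb
  have hb0 : 0 < b := ha.trans hab
  have ht0 : 0 < t := ha.trans h1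
  have hsl := hcvx.slope_mono_adjacent (Set.mem_Ioi.mpr ha) (Set.mem_Ioi.mpr hb0) h1 h2
  rw [div_le_div_iff₀ (by linarith) (by linarith)] at hsl
  have hup : f t ≤ α * t + β := by nlinarith [hfa, hfb]
  exact le_antisymm hup (hlow t (Set.mem_Ioi.mpr ht0))

lemma extend_left {f : ℝ → ℝ} (hoc : OperatorConvexOn (Set.Ioi 0) f)
    (hcvx : ConvexOn ℝ (Set.Ioi 0) f) {p q α β w : ℝ} (hp : 0 < p) (hpq : p < q)
    (haff : ∀ t ∈ Set.Icc p q, f t = α * t + β) (hw0 : 0 < w) (hwp : w < p) (hw2 : p < 2*w) :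
    ∀ t ∈ Set.Icc w q, f t = α * t + β := by
  have hq0 : 0 < q := hp.trans hpq
  have hgpos := line_le hcvx hp hpq haff
  have hfp : f p = α * p + β := haff p ⟨le_rfl, hpq.le⟩
  have hfw : f w = α * w + β := by
    by_contra hne
    have hfwlt : α * w + β < f w := lt_of_le_of_ne (hgpos w (Set.mem_Ioi.mpr hw0)) (Ne.symm hne)
    set r : ℝ := min q (2*w) with hrdef
    have hpr : p < r := by rw [hrdef]; exact lt_min hpq hw2
    set x : ℝ := (p + r)/2 with hxdef
    have hpx : p < x := by rw [hxdef]; linarith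
    have hxq : x < q := by
      have : r ≤ q := min_le_left _ _
      rw [hxdef]; linarith
    have hx2w : x < 2*w := by
      have : r ≤ 2*w := min_le_right _ _
      rw [hxdef]; linarith
    have hx : 0 < x := by linarith
    set sA : ℝ := -((x - p)/2) with hsAdef
    set sB : ℝ := 2*(w - x) with hsBdef
    have hsAneg : sA < 0 := by rw [hsAdef]; linarith
    have hwx : w < x := by linarith
    have hsBneg : sB < 0 := by rw [hsBdef]; linarith
    have hsB4 : sB < 4 * sA := by rw [hsAdef, hsBdef]; linarith
    have hxAmem : x + sA ∈ Set.Icc p q := by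
      rw [hsAdef]
      constructor <;> linarith
    apply core2 hoc (α := α) (β := β) (x := x) (sA := sA) (sB := sB) hx
      (by rw [hsAdef]; linarith) (by rw [hsBdef]; linarith : 0 < x + sB)
      (ne_of_lt hsAneg) (ne_of_lt hsBneg)
      (haff x ⟨hpx.le, hxq.le⟩) (haff _ hxAmem) hgpos
    intro t0 t1 hts htp
    have hP8 : 0 < sA * sB / 8 := by
      have := mul_pos (neg_pos.mpr hsAneg) (neg_pos.mpr hsBneg)
      nlinarith
    have hP : 0 < t0 * t1 := by rw [htp]; linarith
    have hS : t0 + t1 < 0 := by rw [hts]; linarith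
    have ht0neg : t0 < 0 := by
      by_contra h
      push_neg at h
      have ht1 : t1 ≤ 0 := by linarith
      have := mul_nonpos_of_nonneg_of_nonpos h ht1
      linarith
    have ht1neg : t1 < 0 := by
      by_contra h
      push_neg at h
      have ht0 : t0 ≤ 0 := by linarith
      have := mul_nonpos_of_nonpos_of_nonneg ht0 h
      linarith
    have hwx2 : w = x + sB/2 := by rw [hsBdef]; ring
    have hxS : 0 < x + (t0 + t1) := by
      rw [hts, hsAdef, hsBdef]
      linarith
    refine ⟨⟨by linarith, by linarith⟩, ?_⟩
    rcases le_total t0 t1 with hle | hle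
    · left
      have hfact : (t0 - sA/2) * (t0 - sB/2) = sA * sB / 8 := by
        linear_combination t0 * hts - htp
      have hf1 : t0 - sA/2 < 0 := by linarith
      have hf2 : t0 - sB/2 < 0 := by
        by_contra h
        push_neg at h
        have := mul_nonpos_of_nonpos_of_nonneg hf1.le h
        rw [hfact] at this
        linarith
      exact line_lt_left hcvx (by linarith) hfp hwp hfwlt (by linarith)
    · right
      have hfact : (t1 - sA/2) * (t1 - sB/2) = sA * sB / 8 := by
        linear_combination t1 * hts - htp
      have hf1 : t1 - sA/2 < 0 := by linarith
      have hf2 : t1 - sB/2 < 0 := by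
        by_contra h
        push_neg at h
        have := mul_nonpos_of_nonpos_of_nonneg hf1.le h
        rw [hfact] at this
        linarith
      exact line_lt_left hcvx (by linarith) hfp hwp hfwlt (by linarith)
  intro t ht
  rcases le_total t p with h | h
  · exact affine_between hcvx hw0 hwp hfw hfp hgpos ⟨ht.1, h⟩
  · exact haff t ⟨h, ht.2⟩

lemma rigid_all {f : ℝ → ℝ} (hoc : OperatorConvexOn (Set.Ioi 0) f)
    (hcvx : ConvexOn ℝ (Set.Ioi 0) f) {p q α β : ℝ} (hp : 0 < p) (hpq : p < q)
    (haff : ∀ t ∈ Set.Icc p q, f t = α * t + β) :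
    ∀ w ∈ Set.Ioi (0:ℝ), f w = α * w + β := by
  have hq0 : 0 < q := hp.trans hpq
  have hstep : ∀ k : ℕ, ∀ t ∈ Set.Icc ((2/3 : ℝ)^k * p) q, f t = α * t + β := by
    intro k
    induction k with
    | zero => simpa using haff
    | succ k ih =>
      have hpk : 0 < (2/3 : ℝ)^k * p := by positivity
      have hpkq : (2/3 : ℝ)^k * p < q := by
        have h1 : (2/3 : ℝ)^k ≤ 1 := pow_le_one₀ (by norm_num) (by norm_num)
        nlinarith
      have hnew : (2/3 : ℝ)^(k+1) * p = (2/3) * ((2/3 : ℝ)^k * p) := by ring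
      rw [hnew]
      exact extend_left hoc hcvx hpk hpkq ih (by positivity)
        (by nlinarith) (by nlinarith)
  intro w hw
  simp only [Set.mem_Ioi] at hw
  rcases le_or_gt w q with h | h
  · rcases le_total p w with h2 | h2
    · exact haff w ⟨h2, h⟩
    · obtain ⟨k, hk⟩ := exists_pow_lt_of_lt_one (div_pos hw hp) (by norm_num : (2/3 : ℝ) < 1)
      have : (2/3 : ℝ)^k * p < w := by
        rw [div_eq_mul_inv] at hk
        calc (2/3 : ℝ)^k * p < (w * p⁻¹) * p := by
              apply mul_lt_mul_of_pos_right hk hp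
          _ = w := by field_simp
      exact hstep k w ⟨this.le, h⟩
  · exact rigid_right hoc hcvx hp hpq haff h

end core

section mainhelpers

lemma U_starU_mulVec {A : Matrix n n ℂ} (hA : A.IsHermitian) (v : n → ℂ) :
    (hA.eigenvectorUnitary : Matrix n n ℂ) *ᵥ
      ((star (hA.eigenvectorUnitary : Matrix n n ℂ)) *ᵥ v) = v := by
  rw [Matrix.mulVec_mulVec, mul_star_self hA, Matrix.one_mulVec]

lemma starU_A_mulVec {A : Matrix n n ℂ} (hA : A.IsHermitian) (v : n → ℂ) (k : n) :
    ((star (hA.eigenvectorUnitary : Matrix n n ℂ)) *ᵥ (A *ᵥ v)) k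
      = (hA.eigenvalues k : ℂ) *
        ((star (hA.eigenvectorUnitary : Matrix n n ℂ)) *ᵥ v) k := by
  set U : Matrix n n ℂ := (hA.eigenvectorUnitary : Matrix n n ℂ)
  have hUU : star U * U = 1 := (Matrix.mem_unitaryGroup_iff').mp (hA.eigenvectorUnitary).2
  have h1 : star U *ᵥ (A *ᵥ v)
      = Matrix.diagonal (RCLike.ofReal ∘ hA.eigenvalues) *ᵥ (star U *ᵥ v) := by
    conv_lhs => rw [hA.spectral_theorem, Unitary.conjStarAlgAut_apply]
    rw [Matrix.mulVec_mulVec]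
    rw [show star U * (U * Matrix.diagonal (RCLike.ofReal ∘ hA.eigenvalues) * star U)
        = Matrix.diagonal (RCLike.ofReal ∘ hA.eigenvalues) * star U by
      rw [show star U * (U * Matrix.diagonal (RCLike.ofReal ∘ hA.eigenvalues) * star U)
          = (star U * U) * (Matrix.diagonal (RCLike.ofReal ∘ hA.eigenvalues) * star U) by
        noncomm_ring, hUU, Matrix.one_mul]]
    rw [← Matrix.mulVec_mulVec]
  rw [h1, Matrix.mulVec_diagonal]
  rfl

lemma A_mulVec_of_diag {A : Matrix n n ℂ} (hA : A.IsHermitian) (v : n → ℂ) (c : ℂ)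
    (h : ∀ k, (hA.eigenvalues k : ℂ) *
        ((star (hA.eigenvectorUnitary : Matrix n n ℂ)) *ᵥ v) k
      = c * ((star (hA.eigenvectorUnitary : Matrix n n ℂ)) *ᵥ v) k) :
    A *ᵥ v = c • v := by
  have h2 : (star (hA.eigenvectorUnitary : Matrix n n ℂ)) *ᵥ (A *ᵥ v)
      = c • ((star (hA.eigenvectorUnitary : Matrix n n ℂ)) *ᵥ v) := by
    funext k
    rw [starU_A_mulVec hA v k, h k]
    rfl
  calc A *ᵥ v = (hA.eigenvectorUnitary : Matrix n n ℂ) *ᵥ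
        ((star (hA.eigenvectorUnitary : Matrix n n ℂ)) *ᵥ (A *ᵥ v)) :=
          (U_starU_mulVec hA _).symm
    _ = (hA.eigenvectorUnitary : Matrix n n ℂ) *ᵥ
        (c • ((star (hA.eigenvectorUnitary : Matrix n n ℂ)) *ᵥ v)) := by rw [h2]
    _ = c • ((hA.eigenvectorUnitary : Matrix n n ℂ) *ᵥ
        ((star (hA.eigenvectorUnitary : Matrix n n ℂ)) *ᵥ v)) := by
          rw [Matrix.mulVec_smul]
    _ = c • v := by rw [U_starU_mulVec hA]

lemma kron_posDef {m l : Type*} [Fintype m] [Fintype l] [DecidableEq m] [DecidableEq l]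
    {A : Matrix m m ℂ} {B : Matrix l l ℂ} (hA : A.PosDef) (hB : B.PosDef) :
    (A ⊗ₖ B).PosDef := by
  set SA := msqrt A with hSAdef
  set SB := msqrt B with hSBdef
  have hSAh : SA.IsHermitian := msqrt_herm hA.posSemidef
  have hSBh : SB.IsHermitian := msqrt_herm hB.posSemidef
  have hMh : (SA ⊗ₖ SB)ᴴ = SA ⊗ₖ SB := by
    ext ⟨i, j⟩ ⟨k, l'⟩
    simp only [Matrix.conjTranspose_apply, Matrix.kroneckerMap_apply, star_mul']
    rw [show star (SA k i) = SA i k by rw [← Matrix.conjTranspose_apply, hSAh],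
      show star (SB l' j) = SB j l' by rw [← Matrix.conjTranspose_apply, hSBh]]
  have hprod : (SA ⊗ₖ SB)ᴴ * (SA ⊗ₖ SB) = A ⊗ₖ B := by
    rw [hMh, ← Matrix.mul_kronecker_mul, msqrt_mul_self hA.posSemidef,
      msqrt_mul_self hB.posSemidef]
  have hdetA : SA.det ≠ 0 := by
    intro h
    have : A.det = 0 := by rw [← msqrt_mul_self hA.posSemidef, Matrix.det_mul, ← hSAdef, h,
      mul_zero]
    exact hA.det_pos.ne' this
  have hdetB : SB.det ≠ 0 := by
    intro h
    have : B.det = 0 := by rw [← msqrt_mul_self hB.posSemidef, Matrix.det_mul, ← hSBdef, h,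
      mul_zero]
    exact hB.det_pos.ne' this
  have hdet : (SA ⊗ₖ SB).det ≠ 0 := by
    rw [Matrix.det_kronecker]
    exact mul_ne_zero (pow_ne_zero _ hdetA) (pow_ne_zero _ hdetB)
  have hinj : Function.Injective ((SA ⊗ₖ SB).mulVec) :=
    Matrix.mulVec_injective_iff_isUnit.mpr ((Matrix.isUnit_iff_isUnit_det _).mpr hdet.isUnit)
  rw [Matrix.posDef_iff_dotProduct_mulVec]
  constructor
  · rw [← hprod]
    exact (Matrix.posSemidef_conjTranspose_mul_self _).isHermitian
  · intro xv hx
    have hMx : (SA ⊗ₖ SB) *ᵥ xv ≠ 0 := by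
      intro h
      exact hx (hinj (by simp [h]))
    rw [← hprod, ← Matrix.mulVec_mulVec, dotProduct_mulVec,
      Matrix.vecMul_conjTranspose, star_star]
    exact dotProduct_star_self_pos_iff.mpr hMx

end mainhelpers

section mainextra

lemma dot_vecOf {d : ℕ} (Q N : Matrix (Fin d) (Fin d) ℂ) (hQH : Q.IsHermitian) :
    star (vecOf Q) ⬝ᵥ vecOf N = (Q * N).trace := by
  simp only [dotProduct, vecOf, Pi.star_apply, Fintype.sum_prod_type, Matrix.trace,
    Matrix.diag, Matrix.mul_apply]
  rw [Finset.sum_comm]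
  apply Finset.sum_congr rfl; intro j _
  apply Finset.sum_congr rfl; intro i _
  rw [show star (Q i j) = Q j i by rw [← Matrix.conjTranspose_apply, hQH]]

lemma kron_mulVec {d : ℕ} (S R Q : Matrix (Fin d) (Fin d) ℂ) :
    (S ⊗ₖ Rᵀ) *ᵥ vecOf Q = vecOf (S * Q * R) := by
  funext p
  obtain ⟨i, j⟩ := p
  simp only [Matrix.mulVec, dotProduct, vecOf, Matrix.kroneckerMap_apply,
    Fintype.sum_prod_type, Matrix.mul_apply, Matrix.transpose_apply]
  rw [Finset.sum_comm]
  apply Finset.sum_congr rfl; intro l _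
  rw [Finset.sum_mul]
  apply Finset.sum_congr rfl; intro k _
  ring

end mainextra

end Klein

open Klein in
/-- Klein-type inequality `S_f(ρ‖σ) ≥ f(Tr σ / Tr ρ) Tr ρ` with equality
iff `ρ/Tr ρ = σ/Tr σ`, for non-affine operator convex `f`. -/
theorem Srel_klein {d : ℕ} (f : ℝ → ℝ)
    (hf : OperatorConvexOn (Set.Ioi 0) f) (hna : NonAffineOn (Set.Ioi 0) f)
    (ρ σ : Matrix (Fin d) (Fin d) ℂ) (hρ : ρ.PosDef) (hσ : σ.PosDef) :
    f (σ.trace.re / ρ.trace.re) * ρ.trace.re ≤ Srel f ρ σ ∧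
      (Srel f ρ σ = f (σ.trace.re / ρ.trace.re) * ρ.trace.re ↔
        (ρ.trace)⁻¹ • ρ = (σ.trace)⁻¹ • σ) := by
  classical
  rcases Nat.eq_zero_or_pos d with rfl | hd
  · have hρσ : ρ = σ := by ext i j; exact i.elim0
    have htρ : ρ.trace = 0 := by simp [Matrix.trace]
    have htσ : σ.trace = 0 := by simp [Matrix.trace]
    have hsrel : Srel f ρ σ = 0 := by
      simp [Srel, dotProduct]
    rw [htρ, htσ, hsrel, hρσ]
    simp
  -- main case
  have hcvx : ConvexOn ℝ (Set.Ioi 0) f := convexOn_of_operatorConvexOn hf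
  have hρH : ρ.IsHermitian := hρ.isHermitian
  set Q : Matrix (Fin d) (Fin d) ℂ := msqrt ρ with hQdef
  have hmsq : msqrt ρ = Q := rfl
  have hQH : Q.IsHermitian := msqrt_herm hρ.posSemidef
  have hQQ : Q * Q = ρ := msqrt_mul_self hρ.posSemidef
  have hdetQ : Q.det ≠ 0 := by
    intro h
    have h2 : ρ.det = 0 := by rw [← hQQ, Matrix.det_mul, h, mul_zero]
    exact hρ.det_pos.ne' h2
  have hdetρ : IsUnit ρ.det := hρ.det_pos.ne'.isUnit
  have hQinv : Q * (ρ⁻¹ * Q) = 1 := by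
    have hρinv : ρ⁻¹ = Q⁻¹ * Q⁻¹ := by rw [← hQQ, Matrix.mul_inv_rev]
    rw [hρinv, show Q * (Q⁻¹ * Q⁻¹ * Q) = (Q * Q⁻¹) * (Q⁻¹ * Q) by noncomm_ring,
      Matrix.mul_nonsing_inv Q hdetQ.isUnit, Matrix.nonsing_inv_mul Q hdetQ.isUnit, one_mul]
  have hρQ : ρ * Q = Q * ρ := by rw [← hQQ]; noncomm_ring
  set K : Matrix (Fin d × Fin d) (Fin d × Fin d) ℂ := σ ⊗ₖ (ρ⁻¹)ᵀ with hKdef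
  have hτ : ((ρ⁻¹)ᵀ).PosDef := hρ.inv.transpose
  have hK : K.PosDef := kron_posDef hσ hτ
  have hKH : K.IsHermitian := hK.isHermitian
  set v : Fin d × Fin d → ℂ := vecOf Q with hvdef
  set U : Matrix (Fin d × Fin d) (Fin d × Fin d) ℂ :=
    (hKH.eigenvectorUnitary : Matrix (Fin d × Fin d) (Fin d × Fin d) ℂ) with hUdef
  set y : Fin d × Fin d → ℂ := star U *ᵥ v with hydef
  set wgt : Fin d × Fin d → ℝ := fun k => Complex.normSq (y k) with hwdef
  set μ : Fin d × Fin d → ℝ := hKH.eigenvalues with hμdef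
  have hμpos : ∀ k, 0 < μ k := fun k => hK.eigenvalues_pos k
  -- traces are positive reals
  have hTρc : ρ.trace = ((∑ i, hρH.eigenvalues i : ℝ) : ℂ) := (sum_eigenvalues_eq_trace hρH).symm
  have hTσc : σ.trace = ((∑ i, hσ.isHermitian.eigenvalues i : ℝ) : ℂ) :=
    (sum_eigenvalues_eq_trace hσ.isHermitian).symm
  have hne : (Finset.univ : Finset (Fin d)).Nonempty := by
    simpa [Finset.univ_nonempty_iff] using Fin.pos_iff_nonempty.mp hd
  have hTρ : 0 < ρ.trace.re := by
    rw [hTρc, Complex.ofReal_re]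
    exact Finset.sum_pos (fun i _ => hρ.eigenvalues_pos i) hne
  have hTσ : 0 < σ.trace.re := by
    rw [hTσc, Complex.ofReal_re]
    exact Finset.sum_pos (fun i _ => hσ.eigenvalues_pos i) hne
  have hρtrC : ρ.trace = ((ρ.trace.re : ℝ) : ℂ) := by rw [hTρc]; simp
  have hσtrC : σ.trace = ((σ.trace.re : ℝ) : ℂ) := by rw [hTσc]; simp
  set T : ℝ := ρ.trace.re with hTdef
  set Tσ : ℝ := σ.trace.re with hTσdef
  set c : ℝ := Tσ / T with hcdef
  have hc : 0 < c := div_pos hTσ hTρ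
  have hcT : c * T = Tσ := div_mul_cancel₀ _ hTρ.ne'
  -- spectral sums
  have hSrel : Srel f ρ σ = ∑ k, f (μ k) * wgt k := by
    simp only [Srel]
    rw [hmsq, ← hKdef, ← hvdef, quadForm hKH v, Complex.ofReal_re]
  have hvvtr : star v ⬝ᵥ v = ρ.trace := by
    rw [hvdef, dot_vecOf Q Q hQH, hQQ]
  have hsumw : ∑ k, wgt k = T := by
    have h1 := quadForm (f := fun _ => (1:ℝ)) hKH v
    rw [applyFun_const_eig hKH (fun k => rfl)] at h1
    simp only [Complex.ofReal_one, one_smul, Matrix.one_mulVec, one_mul] at h1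
    rw [hvvtr, hρtrC] at h1
    have := Complex.ofReal_inj.mp h1.symm
    rw [← this]
  have hKv : K *ᵥ v = vecOf (σ * Q * ρ⁻¹) := kron_mulVec σ ρ⁻¹ Q
  have hQσQρ : (Q * (σ * Q * ρ⁻¹)).trace = σ.trace := by
    rw [Matrix.trace_mul_comm]
    rw [show σ * Q * ρ⁻¹ * Q = σ * (Q * (ρ⁻¹ * Q)) by noncomm_ring, hQinv, Matrix.mul_one]
  have hKvv : star v ⬝ᵥ (K *ᵥ v) = σ.trace := by
    rw [hKv, hvdef, dot_vecOf Q _ hQH, hQσQρ]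
  have hsumμw : ∑ k, μ k * wgt k = Tσ := by
    have h1 := quadFormSelf hKH v
    rw [hKvv, hσtrC] at h1
    exact (Complex.ofReal_inj.mp h1).symm
  -- support line at c
  obtain ⟨m, hm⟩ := support_line hcvx hc
  have hgap : ∀ k, 0 ≤ wgt k * (f (μ k) - f c - m * (μ k - c)) := by
    intro k
    apply mul_nonneg (Complex.normSq_nonneg _)
    have := hm (μ k) (Set.mem_Ioi.mpr (hμpos k))
    linarith
  have hgapsum : ∑ k, wgt k * (f (μ k) - f c - m * (μ k - c)) = Srel f ρ σ - f c * T := by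
    have hterm : ∀ k, wgt k * (f (μ k) - f c - m * (μ k - c))
        = f (μ k) * wgt k - f c * wgt k - m * (μ k * wgt k) + (m * c) * wgt k := by
      intro k; ring
    rw [Finset.sum_congr rfl (fun k _ => hterm k)]
    rw [Finset.sum_add_distrib, Finset.sum_sub_distrib, Finset.sum_sub_distrib,
      ← Finset.mul_sum, ← Finset.mul_sum, ← Finset.mul_sum, hsumw, hsumμw, hSrel, ← hcT]
    ring
  have hineq : f c * T ≤ Srel f ρ σ := by
    have := Finset.sum_nonneg (fun k (_ : k ∈ Finset.univ) => hgap k)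
    rw [hgapsum] at this
    linarith
  have hρtrne : ρ.trace ≠ 0 := by rw [hρtrC]; exact_mod_cast hTρ.ne'
  have hσtrne : σ.trace ≠ 0 := by rw [hσtrC]; exact_mod_cast hTσ.ne'
  have hc0 : ((c:ℝ):ℂ) ≠ 0 := by exact_mod_cast hc.ne'
  refine ⟨hineq, ?_, ?_⟩
  · -- equality implies proportional
    intro hEq
    have hsum0 : ∑ k, wgt k * (f (μ k) - f c - m * (μ k - c)) = 0 := by
      rw [hgapsum, hEq]; ring
    have hzero : ∀ k, wgt k * (f (μ k) - f c - m * (μ k - c)) = 0 := fun k =>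
      (Finset.sum_eq_zero_iff_of_nonneg (fun k _ => hgap k)).mp hsum0 k (Finset.mem_univ k)
    have hsupp : ∀ k, ((μ k : ℝ) : ℂ) *
        ((star (hKH.eigenvectorUnitary : Matrix (Fin d × Fin d) (Fin d × Fin d) ℂ)) *ᵥ v) k
        = ((c : ℝ) : ℂ) *
        ((star (hKH.eigenvectorUnitary : Matrix (Fin d × Fin d) (Fin d × Fin d) ℂ)) *ᵥ v) k := by
      intro k
      by_cases hy : y k = 0
      · rw [show ((star (hKH.eigenvectorUnitary :
            Matrix (Fin d × Fin d) (Fin d × Fin d) ℂ)) *ᵥ v) k = y k from rfl, hy,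
          mul_zero, mul_zero]
      · have hwk : wgt k ≠ 0 := fun h => hy (Complex.normSq_eq_zero.mp h)
        have hfμ : f (μ k) = f c + m * (μ k - c) := by
          rcases mul_eq_zero.mp (hzero k) with h | h
          · exact absurd h hwk
          · linarith
        by_cases hμc : μ k = c
        · rw [show ((star (hKH.eigenvectorUnitary :
            Matrix (Fin d × Fin d) (Fin d × Fin d) ℂ)) *ᵥ v) k = y k from rfl, hμc]
        · exfalso
          set a := min (μ k) c with hadef
          set b := max (μ k) c with hbdef
          have hab : a < b := by
            rcases lt_or_gt_of_ne hμc with h | h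
            · rw [hadef, hbdef, min_eq_left h.le, max_eq_right h.le]; exact h
            · rw [hadef, hbdef, min_eq_right h.le, max_eq_left h.le]; exact h
          have ha0 : 0 < a := lt_min (hμpos k) hc
          have hlow : ∀ s ∈ Set.Ioi (0:ℝ), m * s + (f c - m * c) ≤ f s := by
            intro s hs
            have := hm s hs
            linarith
          have hfa : f a = m * a + (f c - m * c) := by
            rcases le_total (μ k) c with h | h
            · rw [hadef, min_eq_left h, hfμ]; ring
            · rw [hadef, min_eq_right h]; ring
          have hfb : f b = m * b + (f c - m * c) := by
            rcases le_total (μ k) c with h | h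
            · rw [hbdef, max_eq_right h]; ring
            · rw [hbdef, max_eq_left h, hfμ]; ring
          have haff : ∀ t ∈ Set.Icc a b, f t = m * t + (f c - m * c) :=
            fun t ht => affine_between hcvx ha0 hab hfa hfb hlow ht
          exact hna ⟨m, f c - m * c, rigid_all hf hcvx ha0 hab haff⟩
    have hKvc : K *ᵥ v = ((c : ℝ) : ℂ) • v := A_mulVec_of_diag hKH v _ hsupp
    rw [hKv] at hKvc
    have hmat : σ * Q * ρ⁻¹ = ((c : ℝ) : ℂ) • Q := by
      ext i j
      simpa [vecOf, hvdef] using congrFun hKvc (i, j)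
    have hσcρ : σ = ((c : ℝ) : ℂ) • ρ := by
      have h1 := congrArg (fun M => M * ρ) hmat
      rw [show σ * Q * ρ⁻¹ * ρ = σ * Q * (ρ⁻¹ * ρ) by noncomm_ring,
        Matrix.nonsing_inv_mul ρ hdetρ, Matrix.mul_one, Matrix.smul_mul] at h1
      have h2 := congrArg (fun M => M * Q⁻¹) h1
      rw [Matrix.mul_assoc σ Q Q⁻¹, Matrix.mul_nonsing_inv Q hdetQ.isUnit,
        Matrix.mul_one, Matrix.smul_mul, ← hρQ, Matrix.mul_assoc ρ Q Q⁻¹,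
        Matrix.mul_nonsing_inv Q hdetQ.isUnit, Matrix.mul_one] at h2
      exact h2
    have hσtr : σ.trace = ((c:ℝ):ℂ) * ρ.trace := by
      rw [hσcρ, Matrix.trace_smul, smul_eq_mul]
    have hscal : (((c:ℝ):ℂ) * ρ.trace)⁻¹ * ((c:ℝ):ℂ) = (ρ.trace)⁻¹ := by
      field_simp
    rw [hσtr, hσcρ, smul_smul, hscal]
  · -- proportionality implies equality
    intro hEq
    have hσcρ : σ = ((c : ℝ) : ℂ) • ρ := by
      have h1 := congrArg (fun M => (σ.trace) • M) hEq
      simp only [smul_smul] at h1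
      rw [mul_inv_cancel₀ hσtrne, one_smul] at h1
      rw [← h1]
      congr 1
      rw [hρtrC, hσtrC, hcdef, hTdef, hTσdef]
      push_cast
      rw [div_eq_mul_inv]
    have hKvc : K *ᵥ v = ((c : ℝ) : ℂ) • v := by
      rw [hKv, hσcρ, Matrix.smul_mul, Matrix.smul_mul, hρQ, Matrix.mul_assoc Q ρ ρ⁻¹,
        Matrix.mul_nonsing_inv ρ hdetρ, Matrix.mul_one]
      rfl
    have hyc : ∀ k, ((μ k : ℝ) : ℂ) * y k = ((c:ℝ):ℂ) * y k := by
      intro k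
      have h1 := starU_A_mulVec hKH v k
      rw [hKvc, Matrix.mulVec_smul] at h1
      rw [show ((star (hKH.eigenvectorUnitary :
          Matrix (Fin d × Fin d) (Fin d × Fin d) ℂ)) *ᵥ v) = y from rfl] at h1
      rw [h1.symm]
      simp
    have hfc : ∀ k, f (μ k) * wgt k = f c * wgt k := by
      intro k
      by_cases hy : y k = 0
      · rw [hwdef]; simp [hy]
      · have hμkc : μ k = c := by
          have h3 := hyc k
          have h2 : (((μ k - c : ℝ)) : ℂ) * y k = 0 := by push_cast; linear_combination h3
          rcases mul_eq_zero.mp h2 with h | h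
          · have := Complex.ofReal_eq_zero.mp h; linarith
          · exact absurd h hy
        rw [hμkc]
    rw [hSrel, Finset.sum_congr rfl (fun k _ => hfc k), ← Finset.mul_sum, hsumw]
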